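/- Let a ∈ (0,1), λ > 0. Suppose |E_{a,a}(−x)| ≤ C_0 (1+x)^{−2} for all x ≥ 0. Then for all 0 < s < t and every ρ ∈ [−1, 1]: λ^{ρ/2} |E_{a,1}(−λ t^a) − E_{a,1}(−λ s^a)| ≤ C ∫_s^t u^{−1 − aρ/2} du, where C depends only on a and C_0, using that (λ u^a)^{1+ρ/2} / (1+λ u^a)^2 ≤ 1 for ρ ∈ [−2,2]. -/

import Mathlib

open MeasureTheory intervalIntegral

/-- The Mittag--Leffler function `E_{a,b}(z) = ∑_{k=0}^∞ z^k / Γ(a k + b)`. -/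
noncomputable def mittagLeffler (a b z : ℝ) : ℝ :=
  ∑' k : ℕ, z ^ k / Real.Gamma (a * k + b)

namespace MLaux

/-- A uniform bound on `M ^ (a k) / Γ(a k + b)`. -/
lemma exists_bound {a b M : ℝ} (ha : 0 < a) (hb : 0 < b) (hM : 1 ≤ M) :
    ∃ C > (0 : ℝ), ∀ k : ℕ, M ^ (a * k) / Real.Gamma (a * k + b) ≤ C := by
  have hM0 : (0 : ℝ) < M := lt_of_lt_of_le one_pos hM
  -- bound for M ^ n / n!
  obtain ⟨Cf, hCf⟩ : ∃ Cf : ℝ, ∀ n : ℕ, M ^ n / (n.factorial : ℝ) ≤ Cf := by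
    obtain ⟨Cf, hCf⟩ :=
      ((Real.summable_pow_div_factorial M).tendsto_atTop_zero).bddAbove_range
    exact ⟨Cf, fun n => hCf ⟨n, rfl⟩⟩
  have hCf0 : (0 : ℝ) < max Cf 1 := lt_max_of_lt_right one_pos
  -- lower bound for Γ on [b, b+3]
  have hΓcont : ContinuousOn Real.Gamma (Set.Icc b (b + 3)) := by
    intro x hx
    have hx0 : 0 < x := lt_of_lt_of_le hb hx.1
    refine (Real.differentiableAt_Gamma (fun m => ?_)).continuousAt.continuousWithinAt
    have : (0 : ℝ) ≤ m := Nat.cast_nonneg m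
    nlinarith
  obtain ⟨x₀, hx₀mem, hx₀min⟩ :=
    (isCompact_Icc (a := b) (b := b + 3)).exists_isMinOn ⟨b, by constructor <;> nlinarith⟩ hΓcont
  set ε := Real.Gamma x₀ with hε
  have hεpos : 0 < ε := Real.Gamma_pos_of_pos (lt_of_lt_of_le hb hx₀mem.1)
  refine ⟨max (M ^ (3 : ℕ) * max Cf 1) (M ^ (3 : ℕ) / ε) + 1, by positivity, fun k => ?_⟩
  have hak : (0 : ℝ) ≤ a * k := by positivity
  have hΓpos : 0 < Real.Gamma (a * k + b) := Real.Gamma_pos_of_pos (by positivity)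
  rcases lt_or_ge (a * k) 2 with hsmall | hbig
  · -- small case
    have h1 : M ^ (a * (k : ℕ) : ℝ) ≤ M ^ (3 : ℕ) := by
      rw [← Real.rpow_natCast M 3]
      exact Real.rpow_le_rpow_of_exponent_le hM (by push_cast; nlinarith)
    have h2 : ε ≤ Real.Gamma (a * k + b) := by
      apply hx₀min
      constructor <;> nlinarith
    calc M ^ (a * (k : ℕ) : ℝ) / Real.Gamma (a * k + b) ≤ M ^ (3 : ℕ) / ε := by
          apply div_le_div₀ (by positivity) h1 hεpos h2
      _ ≤ max (M ^ (3 : ℕ) * max Cf 1) (M ^ (3 : ℕ) / ε) + 1 := by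
          have := le_max_right (M ^ (3 : ℕ) * max Cf 1) (M ^ (3 : ℕ) / ε)
          linarith
  · -- large case : use the factorial bound
    set n := ⌊a * (k : ℕ)⌋₊ with hn
    have hn2 : 2 ≤ n := Nat.le_floor (by exact_mod_cast hbig)
    have hn1 : 1 ≤ n := le_trans one_le_two hn2
    have hfloor_le : (n : ℝ) ≤ a * k := Nat.floor_le hak
    have hlt : a * (k : ℝ) < n + 1 := Nat.lt_floor_add_one _
    -- Γ(a k + b) ≥ Γ(n) = (n-1)!
    have hΓmono : Real.Gamma (n : ℝ) ≤ Real.Gamma (a * k + b) := by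
      apply Real.Gamma_strictMonoOn_Ici.monotoneOn
      · simp only [Set.mem_Ici]; exact_mod_cast hn2
      · simp only [Set.mem_Ici]; nlinarith
      · nlinarith
    have hΓn : Real.Gamma (n : ℝ) = ((n-1).factorial : ℝ) := by
      have : ((n : ℝ)) = ((n - 1 : ℕ) : ℝ) + 1 := by
        have : n - 1 + 1 = n := Nat.succ_pred_eq_of_pos hn1
        exact_mod_cast this.symm
      rw [this, Real.Gamma_nat_eq_factorial]
    have hfac_pos : (0 : ℝ) < ((n-1).factorial : ℝ) := by exact_mod_cast (n - 1).factorial_pos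
    have h1 : M ^ (a * (k : ℕ) : ℝ) ≤ M ^ (n + 1) := by
      rw [← Real.rpow_natCast M (n + 1)]
      exact Real.rpow_le_rpow_of_exponent_le hM (by push_cast; linarith)
    have h2 : M ^ (n + 1) = M ^ (2 : ℕ) * M ^ (n - 1) := by
      rw [← pow_add]
      congr 1
      omega
    calc M ^ (a * (k : ℕ) : ℝ) / Real.Gamma (a * k + b)
        ≤ M ^ (n + 1) / ((n-1).factorial : ℝ) := by
          apply div_le_div₀ (by positivity) h1 hfac_pos (hΓn ▸ hΓmono)
      _ = M ^ (2 : ℕ) * (M ^ (n - 1) / ((n-1).factorial : ℝ)) := by rw [h2]; ring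
      _ ≤ M ^ (2 : ℕ) * max Cf 1 := by
          apply mul_le_mul_of_nonneg_left (le_trans (hCf _) (le_max_left _ _)) (by positivity)
      _ ≤ M ^ (3 : ℕ) * max Cf 1 := by
          apply mul_le_mul_of_nonneg_right _ hCf0.le
          apply pow_le_pow_right₀ hM (by norm_num)
      _ ≤ max (M ^ (3 : ℕ) * max Cf 1) (M ^ (3 : ℕ) / ε) + 1 := by
          have := le_max_left (M ^ (3 : ℕ) * max Cf 1) (M ^ (3 : ℕ) / ε)
          linarith

/-- The basic summability estimate for Mittag-Leffler-type series. -/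
lemma summable_aux {a b r : ℝ} (ha : 0 < a) (hb : 0 < b) (hr : 0 ≤ r) :
    Summable (fun k : ℕ => ((k : ℝ) + 1) * r ^ k / Real.Gamma (a * k + b)) := by
  set M : ℝ := max 1 ((2 * r) ^ (1 / a)) with hM
  have hM1 : 1 ≤ M := le_max_left _ _
  have hM0 : (0 : ℝ) < M := lt_of_lt_of_le one_pos hM1
  have hrM : r ≤ M ^ a / 2 := by
    have h1 : ((2 * r) ^ (1 / a)) ^ a ≤ M ^ a :=
      Real.rpow_le_rpow (Real.rpow_nonneg (by linarith) _) (le_max_right _ _) ha.le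
    have h2 : ((2 * r) ^ (1 / a)) ^ a = 2 * r := by
      rw [← Real.rpow_mul (by linarith), one_div, inv_mul_cancel₀ ha.ne', Real.rpow_one]
    linarith [h2 ▸ h1]
  obtain ⟨C, hCpos, hC⟩ := exists_bound ha hb hM1
  have hMa : (0 : ℝ) < M ^ a := Real.rpow_pos_of_pos hM0 a
  -- comparison
  have hbound : ∀ k : ℕ, ((k : ℝ) + 1) * r ^ k / Real.Gamma (a * k + b)
      ≤ C * (((k : ℝ) + 1) * (1 / 2 : ℝ) ^ k) := by
    intro k
    have hΓpos : 0 < Real.Gamma (a * k + b) := Real.Gamma_pos_of_pos (by positivity)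
    have h1 : r ^ k ≤ (M ^ a) ^ k * (1 / 2 : ℝ) ^ k := by
      rw [← mul_pow]
      exact pow_le_pow_left₀ hr (by linarith) k
    have h2 : ((M : ℝ) ^ a) ^ k = M ^ (a * k : ℝ) := by
      rw [Real.rpow_mul hM0.le, Real.rpow_natCast]
    calc ((k : ℝ) + 1) * r ^ k / Real.Gamma (a * k + b)
        ≤ ((k : ℝ) + 1) * ((M ^ a) ^ k * (1 / 2 : ℝ) ^ k) / Real.Gamma (a * k + b) := by
          gcongr
      _ = (M ^ (a * k : ℝ) / Real.Gamma (a * k + b)) * (((k : ℝ) + 1) * (1 / 2 : ℝ) ^ k) := by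
          rw [← h2]; ring
      _ ≤ C * (((k : ℝ) + 1) * (1 / 2 : ℝ) ^ k) := by
          apply mul_le_mul_of_nonneg_right (hC k) (by positivity)
  have hsum : Summable (fun k : ℕ => C * (((k : ℝ) + 1) * (1 / 2 : ℝ) ^ k)) := by
    apply Summable.mul_left
    have h1 : Summable (fun k : ℕ => (k : ℝ) ^ (1 : ℕ) * (1 / 2 : ℝ) ^ k) :=
      summable_pow_mul_geometric_of_norm_lt_one 1 (by rw [Real.norm_eq_abs, abs_of_pos] <;> norm_num)
    have h2 : Summable (fun k : ℕ => (1 / 2 : ℝ) ^ k) :=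
      summable_geometric_of_lt_one (by norm_num) (by norm_num)
    have := h1.add h2
    apply this.congr
    intro k
    push_cast
    ring
  exact Summable.of_nonneg_of_le
    (fun k => by positivity) hbound hsum

/-- Differentiability of the Mittag-Leffler function in its argument. -/
lemma hasDerivAt_ML {a b : ℝ} (ha : 0 < a) (hb : 0 < b) (x : ℝ) :
    HasDerivAt (fun y => mittagLeffler a b y)
      (∑' k : ℕ, (k : ℝ) * x ^ (k - 1) / Real.Gamma (a * k + b)) x := by
  set R : ℝ := |x| + 1 with hR
  have hR1 : (1 : ℝ) ≤ R := by rw [hR]; linarith [abs_nonneg x]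
  have hR0 : (0 : ℝ) < R := lt_of_lt_of_le one_pos hR1
  have hu : Summable (fun k : ℕ => ((k : ℝ) + 1) * R ^ k / Real.Gamma (a * k + b)) :=
    summable_aux ha hb (by linarith)
  have key : HasDerivAt (fun z => ∑' k : ℕ, z ^ k / Real.Gamma (a * k + b))
      (∑' k : ℕ, (k : ℝ) * x ^ (k - 1) / Real.Gamma (a * k + b)) x := by
    apply hasDerivAt_tsum_of_isPreconnected hu Metric.isOpen_ball
      ((convex_ball (0:ℝ) R).isPreconnected) (y₀ := 0)
      (g' := fun (k : ℕ) (y : ℝ) => (k : ℝ) * y ^ (k - 1) / Real.Gamma (a * k + b))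
    · intro k y _
      exact (hasDerivAt_pow k y).div_const _
    · intro k y hy
      have hΓpos : 0 < Real.Gamma (a * k + b) := Real.Gamma_pos_of_pos (by positivity)
      have hyR : |y| ≤ R := by
        rw [Metric.mem_ball, dist_zero_right, Real.norm_eq_abs] at hy
        exact hy.le
      rw [Real.norm_eq_abs, abs_div, abs_of_pos hΓpos, abs_mul, Nat.abs_cast, abs_pow]
      gcongr
      · linarith
      · calc |y| ^ (k - 1) ≤ R ^ (k - 1) := pow_le_pow_left₀ (abs_nonneg y) hyR _
          _ ≤ R ^ k := pow_le_pow_right₀ hR1 (Nat.sub_le k 1)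
    · exact Metric.mem_ball_self hR0
    · apply summable_of_finite_support
      apply Set.Finite.subset (Set.finite_singleton 0)
      intro k hk
      simp only [Function.mem_support] at hk
      by_contra hk0
      apply hk
      rw [zero_pow (by simpa using hk0)]
      simp
    · rw [Metric.mem_ball, dist_zero_right, Real.norm_eq_abs]
      linarith
  simpa [mittagLeffler] using key

lemma continuous_ML {a b : ℝ} (ha : 0 < a) (hb : 0 < b) :
    Continuous (fun y => mittagLeffler a b y) :=
  continuous_iff_continuousAt.2 fun x => (hasDerivAt_ML ha hb x).continuousAt

/-- Summability of the derivative series. -/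
lemma summable_deriv {a b : ℝ} (ha : 0 < a) (hb : 0 < b) (x : ℝ) :
    Summable (fun k : ℕ => (k : ℝ) * x ^ (k - 1) / Real.Gamma (a * k + b)) := by
  set R : ℝ := |x| + 1 with hR
  have hR1 : (1 : ℝ) ≤ R := by rw [hR]; linarith [abs_nonneg x]
  have hu : Summable (fun k : ℕ => ((k : ℝ) + 1) * R ^ k / Real.Gamma (a * k + b)) :=
    summable_aux ha hb (by linarith)
  apply Summable.of_norm_bounded hu
  intro k
  have hΓpos : 0 < Real.Gamma (a * k + b) := Real.Gamma_pos_of_pos (by positivity)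
  rw [Real.norm_eq_abs, abs_div, abs_of_pos hΓpos, abs_mul, Nat.abs_cast, abs_pow]
  gcongr
  · linarith
  · calc |x| ^ (k - 1) ≤ R ^ (k - 1) := pow_le_pow_left₀ (abs_nonneg x) (by simp [hR]) _
      _ ≤ R ^ k := pow_le_pow_right₀ hR1 (Nat.sub_le k 1)

/-- The derivative of `E_{a,1}` is `E_{a,a} / a`. -/
lemma hasDerivAt_ML_one {a : ℝ} (ha : 0 < a) (x : ℝ) :
    HasDerivAt (fun y => mittagLeffler a 1 y) (mittagLeffler a a x / a) x := by
  have h := hasDerivAt_ML ha one_pos x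
  have heq : (∑' k : ℕ, (k : ℝ) * x ^ (k - 1) / Real.Gamma (a * k + 1))
      = mittagLeffler a a x / a := by
    rw [Summable.tsum_eq_zero_add (summable_deriv ha one_pos x)]
    simp only [Nat.cast_zero, zero_mul, zero_div, zero_add]
    have : ∀ k : ℕ, ((k + 1 : ℕ) : ℝ) * x ^ (k + 1 - 1) / Real.Gamma (a * (k + 1 : ℕ) + 1)
        = x ^ k / Real.Gamma (a * k + a) / a := by
      intro k
      have hpos : (0 : ℝ) < a * k + a := by positivity
      have hΓ : Real.Gamma (a * (k + 1 : ℕ) + 1) = (a * k + a) * Real.Gamma (a * k + a) := by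
        have harg : a * ((k + 1 : ℕ) : ℝ) + 1 = (a * k + a) + 1 := by push_cast; ring
        rw [harg, Real.Gamma_add_one hpos.ne']
      rw [hΓ]
      have hΓpos : 0 < Real.Gamma (a * k + a) := Real.Gamma_pos_of_pos (by positivity)
      field_simp
      push_cast
      ring
    rw [tsum_congr this, tsum_div_const]
    rfl
  rw [← heq]
  exact h

end MLaux

theorem stmt_11 (a lam C₀ : ℝ) (ha : 0 < a) (ha1 : a < 1) (hlam : 0 < lam)
    (hC₀ : 0 < C₀)
    (hML : ∀ x : ℝ, 0 ≤ x → |mittagLeffler a a (-x)| ≤ C₀ * (1 + x) ^ (-(2 : ℝ))) :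
    ∃ C > (0 : ℝ), ∀ s t ρ : ℝ, 0 < s → s < t → -1 ≤ ρ → ρ ≤ 1 →
      lam ^ (ρ / 2) * |mittagLeffler a 1 (-lam * t ^ a) - mittagLeffler a 1 (-lam * s ^ a)|
        ≤ C * ∫ u in s..t, u ^ (-1 - a * ρ / 2) := by
  refine ⟨C₀, hC₀, fun s t ρ hs hst hρ1 hρ2 => ?_⟩
  have hts : s ≤ t := hst.le
  have huIcc : Set.uIcc s t = Set.Icc s t := Set.uIcc_of_le hts
  set F : ℝ → ℝ := fun u => mittagLeffler a 1 (-lam * u ^ a) with hF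
  set G : ℝ → ℝ := fun u =>
    mittagLeffler a a (-lam * u ^ a) / a * (-lam * (a * u ^ (a - 1))) with hG
  -- derivative
  have hder : ∀ u ∈ Set.uIcc s t, HasDerivAt F (G u) u := by
    intro u hu
    rw [huIcc] at hu
    have hu0 : 0 < u := lt_of_lt_of_le hs hu.1
    have inner : HasDerivAt (fun u : ℝ => -lam * u ^ a) (-lam * (a * u ^ (a - 1))) u :=
      (Real.hasDerivAt_rpow_const (Or.inl hu0.ne')).const_mul (-lam)
    exact (MLaux.hasDerivAt_ML_one ha (-lam * u ^ a)).comp u inner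
  -- continuity of the derivative on [s,t]
  have hGcont : ContinuousOn G (Set.uIcc s t) := by
    rw [huIcc]
    have hne : ∀ u ∈ Set.Icc s t, u ≠ 0 := fun u hu => (lt_of_lt_of_le hs hu.1).ne'
    have h1 : ContinuousOn (fun u : ℝ => u ^ a) (Set.Icc s t) := fun u hu =>
      (Real.continuousAt_rpow_const u a (Or.inl (hne u hu))).continuousWithinAt
    have h2 : ContinuousOn (fun u : ℝ => u ^ (a - 1)) (Set.Icc s t) := fun u hu =>
      (Real.continuousAt_rpow_const u (a - 1) (Or.inl (hne u hu))).continuousWithinAt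
    exact (((MLaux.continuous_ML ha ha).comp_continuousOn
      (continuousOn_const.mul h1)).div_const a).mul
      (continuousOn_const.mul (continuousOn_const.mul h2))
  have hGint : IntervalIntegrable G volume s t := hGcont.intervalIntegrable
  have hFTC : ∫ u in s..t, G u = F t - F s :=
    intervalIntegral.integral_eq_sub_of_hasDerivAt hder hGint
  -- pointwise bound
  have hpt : ∀ u ∈ Set.Icc s t,
      lam ^ (ρ / 2) * |G u| ≤ C₀ * u ^ (-1 - a * ρ / 2) := by
    intro u hu
    have hu0 : 0 < u := lt_of_lt_of_le hs hu.1
    set x : ℝ := lam * u ^ a with hx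
    have hua : (0 : ℝ) < u ^ a := Real.rpow_pos_of_pos hu0 a
    have hxpos : 0 < x := by positivity
    have hMLx : |mittagLeffler a a (-x)| ≤ C₀ * (1 + x) ^ (-(2 : ℝ)) := hML x hxpos.le
    have hGu : |G u| = lam * u ^ (a - 1) * |mittagLeffler a a (-x)| := by
      have h1 : G u = -(lam * u ^ (a - 1) * mittagLeffler a a (-x)) := by
        simp only [hG, hx, neg_mul]
        field_simp
      rw [h1, abs_neg, abs_mul, abs_of_pos (by positivity : (0:ℝ) < lam * u ^ (a - 1))]
    -- key rpow inequality
    have hθ1 : (0 : ℝ) ≤ 1 + ρ / 2 := by linarith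
    have hθ2 : 1 + ρ / 2 ≤ 2 := by linarith
    have hxbound : x ^ (1 + ρ / 2) * (1 + x) ^ (-(2 : ℝ)) ≤ 1 := by
      have h1 : x ^ (1 + ρ / 2) ≤ (1 + x) ^ (2 : ℝ) :=
        le_trans (Real.rpow_le_rpow hxpos.le (by linarith) hθ1)
          (Real.rpow_le_rpow_of_exponent_le (by linarith) hθ2)
      rw [Real.rpow_neg (by linarith), ← div_eq_mul_inv,
        div_le_one (Real.rpow_pos_of_pos (by linarith) _)]
      exact h1
    -- the algebraic identity
    have hexp : x ^ (1 + ρ / 2) = lam ^ (1 + ρ / 2) * u ^ (a * (1 + ρ / 2)) := by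
      rw [hx, Real.mul_rpow hlam.le hua.le, ← Real.rpow_mul hu0.le]
    have hlam2 : lam ^ (1 + ρ / 2 : ℝ) = lam * lam ^ (ρ / 2) := by
      rw [Real.rpow_add hlam, Real.rpow_one]
    have huexp : u ^ (a * (1 + ρ / 2)) * u ^ (-1 - a * ρ / 2) = u ^ (a - 1) := by
      rw [← Real.rpow_add hu0]
      congr 1
      ring
    calc lam ^ (ρ / 2) * |G u|
        ≤ lam ^ (ρ / 2) * (lam * u ^ (a - 1) * (C₀ * (1 + x) ^ (-(2 : ℝ)))) := by
          rw [hGu]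
          gcongr
      _ = C₀ * (x ^ (1 + ρ / 2) * (1 + x) ^ (-(2 : ℝ))) * u ^ (-1 - a * ρ / 2) := by
          rw [hexp, hlam2, ← huexp]
          ring
      _ ≤ C₀ * 1 * u ^ (-1 - a * ρ / 2) := by
          apply mul_le_mul_of_nonneg_right _ (Real.rpow_nonneg hu0.le _)
          exact mul_le_mul_of_nonneg_left hxbound hC₀.le
      _ = C₀ * u ^ (-1 - a * ρ / 2) := by ring
  -- integrability of both sides
  have hGabs_int : IntervalIntegrable (fun u => lam ^ (ρ / 2) * |G u|) volume s t :=
    (continuousOn_const.mul hGcont.abs).intervalIntegrable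
  have hrpow_cont : ContinuousOn (fun u : ℝ => C₀ * u ^ (-1 - a * ρ / 2)) (Set.uIcc s t) := by
    rw [huIcc]
    exact continuousOn_const.mul fun u hu =>
      (Real.continuousAt_rpow_const u _ (Or.inl (lt_of_lt_of_le hs hu.1).ne')).continuousWithinAt
  have hrpow_int : IntervalIntegrable (fun u : ℝ => C₀ * u ^ (-1 - a * ρ / 2)) volume s t :=
    hrpow_cont.intervalIntegrable
  -- final chain
  calc lam ^ (ρ / 2) * |F t - F s|
      = lam ^ (ρ / 2) * |∫ u in s..t, G u| := by rw [hFTC]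
    _ ≤ lam ^ (ρ / 2) * ∫ u in s..t, |G u| := by
        apply mul_le_mul_of_nonneg_left
          (intervalIntegral.abs_integral_le_integral_abs hts)
          (Real.rpow_nonneg hlam.le _)
    _ = ∫ u in s..t, lam ^ (ρ / 2) * |G u| := by
        rw [intervalIntegral.integral_const_mul]
    _ ≤ ∫ u in s..t, C₀ * u ^ (-1 - a * ρ / 2) :=
        intervalIntegral.integral_mono_on hts hGabs_int hrpow_int hpt
    _ = C₀ * ∫ u in s..t, u ^ (-1 - a * ρ / 2) := by
        rw [intervalIntegral.integral_const_mul]
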